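/- Let V be a non-real conjugacy class and let g = (z−α₁)⋯(z−α_n) and h = (z−β₁)⋯(z−β_k) with n ≥ k, where (α₁,…,α_n) and (β₁,…,β_k) are spherical chains in V. If α₁ ≠ β₁ (g and h left coprime), then the least right common multiple of g and h equals 𝒳_V^k if n = k, and equals 𝒳_V^k · (z−α₁)(z−α₂)⋯(z−α_{n−k}) if n > k. -/

import Mathlib

open Polynomial

noncomputable section Stmt18Aux

local notation "H" => Quaternion ℝ

/-- The characteristic polynomial of the sphere with real part `r` and norm `s`. -/
def XV (r s : ℝ) : H[X] :=
  X ^ 2 - C ((2 * r : ℝ) : H) * X + C ((s ^ 2 : ℝ) : H)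

/-- Product of the first `m` linear factors of the chain `γ`. -/
def Pc (γ : ℕ → H) (m : ℕ) : H[X] :=
  ((List.range m).map fun i => X - C (γ i)).prod

theorem Pc_zero (γ : ℕ → H) : Pc γ 0 = 1 := by simp [Pc]

theorem Pc_succ_left (γ : ℕ → H) (m : ℕ) :
    Pc γ (m + 1) = (X - C (γ 0)) * Pc (fun i => γ (i + 1)) m := by
  simp [Pc, List.range_succ_eq_map, List.map_map, Function.comp_def]

theorem Pc_succ_right (γ : ℕ → H) (m : ℕ) :
    Pc γ (m + 1) = Pc γ m * (X - C (γ m)) := by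
  simp [Pc, List.range_succ]

theorem XV_eq {r s : ℝ} {a : H} (h1 : a.re = r) (h2 : ‖a‖ = s) :
    (X - C a) * (X - C (star a)) = XV r s := by
  have h3 : (a * star a : H) = ((s ^ 2 : ℝ) : H) := by
    rw [Quaternion.self_mul_star, Quaternion.normSq_eq_norm_mul_self, h2, sq]
  have h4 : (a + star a : H) = ((2 * r : ℝ) : H) := by
    rw [Quaternion.self_add_star', h1]
  have : (X - C a) * (X - C (star a))
      = X * X - C (star a) * X - C a * X + C a * C (star a) := by
    rw [sub_mul, mul_sub, mul_sub, X_mul_C]; noncomm_ring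
  rw [this, ← C_mul, h3, XV, ← h4, C_add]
  noncomm_ring


theorem C_real_commute (x : ℝ) (p : H[X]) : Commute (C ((x : H))) p := by
  show _ = _
  refine Polynomial.ext fun n => ?_
  rw [coeff_C_mul, coeff_mul_C]
  exact Quaternion.coe_commutes x _

theorem XV_commute (r s : ℝ) (p : H[X]) : Commute (XV r s) p := by
  have cX : Commute (X : H[X]) p := commute_X p
  exact ((cX.pow_left 2).sub_left ((C_real_commute (2 * r) p).mul_left cX)).add_left
    (C_real_commute (s ^ 2) p)

theorem degree_XV {r s : ℝ} {a : H} (h1 : a.re = r) (h2 : ‖a‖ = s) :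
    (XV r s).degree = 2 := by
  rw [← XV_eq h1 h2, degree_mul, degree_X_sub_C, degree_X_sub_C]
  rfl

theorem lemA {r s : ℝ} {a b : H} (hab : a ≠ b)
    (ha1 : a.re = r) (ha2 : ‖a‖ = s) (hb1 : b.re = r) (hb2 : ‖b‖ = s)
    {p q : H[X]} (h : (X - C a) * p = (X - C b) * q) :
    ∃ t, p = (X - C (star a)) * t ∧ q = (X - C (star b)) * t := by
  classical
  set t := p /ₘ (X - C (star a)) with ht
  set t' := q /ₘ (X - C (star b)) with ht'
  have hp : p %ₘ (X - C (star a)) + (X - C (star a)) * t = p :=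
    modByMonic_add_div p _
  have hq : q %ₘ (X - C (star b)) + (X - C (star b)) * t' = q :=
    modByMonic_add_div q _
  have hdegp : (p %ₘ (X - C (star a))).degree ≤ 0 := by
    have := degree_modByMonic_lt p (monic_X_sub_C (star a))
    rw [degree_X_sub_C] at this
    exact Nat.WithBot.lt_one_iff_le_zero.mp this
  have hdegq : (q %ₘ (X - C (star b))).degree ≤ 0 := by
    have := degree_modByMonic_lt q (monic_X_sub_C (star b))
    rw [degree_X_sub_C] at this
    exact Nat.WithBot.lt_one_iff_le_zero.mp this
  set c := (p %ₘ (X - C (star a))).coeff 0 with hc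
  set c' := (q %ₘ (X - C (star b))).coeff 0 with hc'
  have hpc : p = (X - C (star a)) * t + C c := by
    rw [hc, ← eq_C_of_degree_le_zero hdegp]
    conv_lhs => rw [← hp]
    exact add_comm _ _
  have hqc : q = (X - C (star b)) * t' + C c' := by
    rw [hc', ← eq_C_of_degree_le_zero hdegq]
    conv_lhs => rw [← hq]
    exact add_comm _ _
  have key : XV r s * t + (X - C a) * C c = XV r s * t' + (X - C b) * C c' := by
    calc XV r s * t + (X - C a) * C c
        = (X - C a) * ((X - C (star a)) * t + C c) := by
          rw [mul_add, ← mul_assoc, XV_eq ha1 ha2]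
      _ = (X - C b) * ((X - C (star b)) * t' + C c') := by rw [← hpc, ← hqc, h]
      _ = XV r s * t' + (X - C b) * C c' := by
          rw [mul_add, ← mul_assoc, XV_eq hb1 hb2]
  have heq : XV r s * (t - t') = (X - C b) * C c' - (X - C a) * C c := by
    rw [mul_sub, sub_eq_sub_iff_add_eq_add]
    exact key.trans (add_comm _ _)
  have hdegrhs : ((X - C b) * C c' - (X - C a) * C c).degree ≤ 1 := by
    have aux : ∀ (x : H) (y : H), ((X - C x) * C y).degree ≤ 1 := by
      intro x y
      refine (degree_mul_le _ _).trans ?_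
      rw [degree_X_sub_C]
      calc (1 : WithBot ℕ) + (C y).degree ≤ 1 + 0 := add_le_add_right degree_C_le 1
        _ = 1 := add_zero 1
    exact (degree_sub_le _ _).trans (sup_le (aux b c') (aux a c))
  have htt' : t = t' := by
    by_contra hne
    have h0 : t - t' ≠ 0 := sub_ne_zero_of_ne hne
    have hd : (XV r s * (t - t')).degree = 2 + (t - t').degree := by
      rw [degree_mul, degree_XV ha1 ha2]
    have h1 : (1 : WithBot ℕ) < 2 + (t - t').degree := by
      have h2 : (0 : WithBot ℕ) ≤ (t - t').degree := zero_le_degree_iff.mpr h0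
      calc (1 : WithBot ℕ) < 2 := by norm_num
        _ = 2 + 0 := (add_zero 2).symm
        _ ≤ 2 + (t - t').degree := add_le_add_right h2 2
    rw [heq] at hd
    exact absurd (hd ▸ hdegrhs) (not_le.mpr h1)
  have hrhs0 : (X - C b) * C c' - (X - C a) * C c = 0 := by
    rw [← heq, htt', sub_self, mul_zero]
  have hexp : C c' * X - C (b * c') - (C c * X - C (a * c)) = 0 := by
    have e1 : (X - C b) * C c' = C c' * X - C (b * c') := by
      rw [sub_mul, X_mul_C, C_mul]
    have e2 : (X - C a) * C c = C c * X - C (a * c) := by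
      rw [sub_mul, X_mul_C, C_mul]
    rw [← e1, ← e2, hrhs0]
  have hcc' : c' = c := by
    have h5 := congrArg (fun p => Polynomial.coeff p 1) hexp
    have h6 : c' - c = 0 := by simpa [coeff_C] using h5
    exact sub_eq_zero.mp h6
  have hc0 : c = 0 := by
    have h5 := congrArg (fun p => Polynomial.coeff p 0) hexp
    simp only [coeff_sub, coeff_C_mul, coeff_C, coeff_X_zero, mul_zero, coeff_zero,
      if_pos rfl, hcc'] at h5
    by_contra hcne
    have h6 : b * c = a * c := by
      have := sub_eq_zero.mp h5
      simpa using this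
    exact hab (mul_right_cancel₀ hcne h6).symm
  refine ⟨t, ?_, ?_⟩
  · rw [hpc, hc0, map_zero, add_zero]
  · rw [hqc, htt', hcc', hc0, map_zero, add_zero]

theorem lemB {r s : ℝ} : ∀ (m : ℕ) (γ : ℕ → H) (δ : H) (w u : H[X]),
    δ.re = r → ‖δ‖ = s →
    (∀ i < m + 1, (γ i).re = r ∧ ‖γ i‖ = s) →
    (∀ i, i + 1 < m + 1 → γ (i + 1) ≠ star (γ i)) →
    γ 0 ≠ star δ →
    (X - C (star δ)) * w = Pc γ (m + 1) * u →
    ∃ t, w = (X - C δ) * (Pc γ m * t) := by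
  intro m
  induction m with
  | zero =>
    intro γ δ w u hδ1 hδ2 hV _ hne heq
    rw [Pc_succ_left, Pc_zero, mul_one] at heq
    obtain ⟨t, ht1, _⟩ := lemA (Ne.symm hne)
      ((Quaternion.re_star δ).trans hδ1) ((Quaternion.norm_star δ).trans hδ2)
      (hV 0 Nat.one_pos).1 (hV 0 Nat.one_pos).2 heq
    rw [star_star] at ht1
    exact ⟨t, by rw [ht1, Pc_zero, one_mul]⟩
  | succ m ih =>
    intro γ δ w u hδ1 hδ2 hV hchain hne heq
    rw [Pc_succ_left, mul_assoc] at heq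
    obtain ⟨t, ht1, ht2⟩ := lemA (Ne.symm hne)
      ((Quaternion.re_star δ).trans hδ1) ((Quaternion.norm_star δ).trans hδ2)
      (hV 0 (Nat.succ_pos _)).1 (hV 0 (Nat.succ_pos _)).2 heq
    rw [star_star] at ht1
    -- ht2 : Pc (γ ∘ succ) (m+1) * u = (X - C (star (γ 0))) * t
    obtain ⟨t₂, ht₂⟩ := ih (fun i => γ (i + 1)) (γ 0) t u
      (hV 0 (Nat.succ_pos _)).1 (hV 0 (Nat.succ_pos _)).2
      (fun i hi => hV (i + 1) (by omega))
      (fun i hi => hchain (i + 1) (by omega))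
      (hchain 0 (by omega))
      ht2.symm
    refine ⟨t₂, ?_⟩
    rw [ht1, ht₂, Pc_succ_left, mul_assoc]

theorem fwd {r s : ℝ} : ∀ (k n : ℕ) (α β : ℕ → H) (q u v : H[X]),
    1 ≤ k → k ≤ n →
    (∀ i < n, (α i).re = r ∧ ‖α i‖ = s) →
    (∀ i < k, (β i).re = r ∧ ‖β i‖ = s) →
    (∀ i, i + 1 < n → α (i + 1) ≠ star (α i)) →
    (∀ i, i + 1 < k → β (i + 1) ≠ star (β i)) →
    α 0 ≠ β 0 →
    q = Pc α n * u → q = Pc β k * v →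
    ∃ t, q = XV r s ^ k * (Pc α (n - k) * t) := by
  intro k
  induction k with
  | zero => intro n α β q u v hk; omega
  | succ k ih =>
    intro n α β q u v _ hkn hαV hβV hαchain hβchain hcop hqg hqh
    obtain ⟨m, rfl⟩ : ∃ m, n = m + 1 := ⟨n - 1, by omega⟩
    rw [Pc_succ_left, mul_assoc] at hqg
    rw [Pc_succ_left, mul_assoc] at hqh
    obtain ⟨t, ht1, ht2⟩ := lemA hcop (hαV 0 (Nat.succ_pos m)).1 (hαV 0 (Nat.succ_pos m)).2
      (hβV 0 (Nat.succ_pos k)).1 (hβV 0 (Nat.succ_pos k)).2 (hqg.symm.trans hqh)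
    have hqX : q = XV r s * t := by
      rw [hqg, ht1, ← mul_assoc, XV_eq (hαV 0 (Nat.succ_pos m)).1 (hαV 0 (Nat.succ_pos m)).2]
    rcases Nat.eq_zero_or_pos k with hk0 | hk1
    · subst hk0
      rcases Nat.eq_zero_or_pos m with hm0 | hm1
      · subst hm0
        refine ⟨t, ?_⟩
        simpa [Pc_zero] using hqX
      · obtain ⟨m', rfl⟩ : ∃ m', m = m' + 1 := ⟨m - 1, by omega⟩
        obtain ⟨t₂, ht₂⟩ := lemB m' (fun i => α (i + 1)) (α 0) t u
          (hαV 0 (by omega)).1 (hαV 0 (by omega)).2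
          (fun i hi => hαV (i + 1) (by omega))
          (fun i hi => hαchain (i + 1) (by omega))
          (hαchain 0 (by omega)) ht1.symm
        refine ⟨t₂, ?_⟩
        have hidx : m' + 1 + 1 - 1 = m' + 1 := by omega
        rw [hqX, ht₂, hidx, pow_one, Pc_succ_left, mul_assoc]
    · obtain ⟨k', rfl⟩ : ∃ k', k = k' + 1 := ⟨k - 1, by omega⟩
      obtain ⟨m', rfl⟩ : ∃ m', m = m' + 1 := ⟨m - 1, by omega⟩
      obtain ⟨t₁, ht₁⟩ := lemB m' (fun i => α (i + 1)) (α 0) t u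
        (hαV 0 (by omega)).1 (hαV 0 (by omega)).2
        (fun i hi => hαV (i + 1) (by omega))
        (fun i hi => hαchain (i + 1) (by omega))
        (hαchain 0 (by omega)) ht1.symm
      obtain ⟨t₂, ht₂⟩ := lemB k' (fun i => β (i + 1)) (β 0) t v
        (hβV 0 (by omega)).1 (hβV 0 (by omega)).2
        (fun i hi => hβV (i + 1) (by omega))
        (fun i hi => hβchain (i + 1) (by omega))
        (hβchain 0 (by omega)) ht2.symm
      have htα : t = Pc α (m' + 1) * t₁ := by rw [Pc_succ_left, mul_assoc]; exact ht₁
      have htβ : t = Pc β (k' + 1) * t₂ := by rw [Pc_succ_left, mul_assoc]; exact ht₂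
      obtain ⟨t₃, ht₃⟩ := ih (m' + 1) α β t t₁ t₂ (by omega) (by omega)
        (fun i hi => hαV i (by omega)) (fun i hi => hβV i (by omega))
        (fun i hi => hαchain i (by omega)) (fun i hi => hβchain i (by omega))
        hcop htα htβ
      refine ⟨t₃, ?_⟩
      have hidx : m' + 1 + 1 - (k' + 1 + 1) = m' + 1 - (k' + 1) := by omega
      rw [hidx, hqX, ht₃, ← mul_assoc, ← pow_succ']

theorem rev {r s : ℝ} (γ : ℕ → H) : ∀ (j m : ℕ),
    (∀ i < m + j, (γ i).re = r ∧ ‖γ i‖ = s) →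
    ∃ t, Pc γ m * XV r s ^ j = Pc γ (m + j) * t := by
  intro j
  induction j with
  | zero => intro m _; exact ⟨1, by simp⟩
  | succ j ih =>
    intro m hV
    obtain ⟨t, ht⟩ := ih (m + 1) (fun i hi => hV i (by omega))
    have hXV : XV r s = (X - C (γ m)) * (X - C (star (γ m))) :=
      (XV_eq (hV m (by omega)).1 (hV m (by omega)).2).symm
    refine ⟨t * (X - C (star (γ m))), ?_⟩
    calc Pc γ m * XV r s ^ (j + 1)
        = Pc γ m * (XV r s * XV r s ^ j) := by rw [pow_succ']
      _ = Pc γ (m + 1) * ((X - C (star (γ m))) * XV r s ^ j) := by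
          rw [Pc_succ_right, hXV]; noncomm_ring
      _ = Pc γ (m + 1) * (XV r s ^ j * (X - C (star (γ m)))) := by
          rw [((XV_commute r s _).pow_left j).eq]
      _ = (Pc γ (m + 1) * XV r s ^ j) * (X - C (star (γ m))) := by rw [mul_assoc]
      _ = Pc γ (m + 1 + j) * (t * (X - C (star (γ m)))) := by rw [ht, mul_assoc]
      _ = Pc γ (m + (j + 1)) * (t * (X - C (star (γ m)))) := by ring_nf

end Stmt18Aux

/-- Least right common multiple of two left-coprime indecomposable polynomials
`g = (z−α₁)⋯(z−α_n)` and `h = (z−β₁)⋯(z−β_k)` (spherical chains in the same non-real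
conjugacy class, `n ≥ k`, `α₁ ≠ β₁`): the right ideal `⟨g⟩ᵣ ∩ ⟨h⟩ᵣ` is generated by
`𝒳_V^k (z−α₁)⋯(z−α_{n−k})` (which is `𝒳_V^k` when `n = k`). -/
theorem stmt18 (n k : ℕ) (hk : 1 ≤ k) (hnk : k ≤ n) (αs βs : ℕ → Quaternion ℝ)
    (hα0 : (αs 0).im ≠ 0)
    (hαV : ∀ i < n, (αs i).re = (αs 0).re ∧ ‖αs i‖ = ‖αs 0‖)
    (hβV : ∀ i < k, (βs i).re = (αs 0).re ∧ ‖βs i‖ = ‖αs 0‖)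
    (hαchain : ∀ i, i + 1 < n → αs (i + 1) ≠ star (αs i))
    (hβchain : ∀ i, i + 1 < k → βs (i + 1) ≠ star (βs i))
    (hcop : αs 0 ≠ βs 0) :
    ∀ q : Polynomial (Quaternion ℝ),
      ((∃ u, q = (((List.range n).map fun i => X - C (αs i)).prod) * u) ∧
        (∃ u, q = (((List.range k).map fun i => X - C (βs i)).prod) * u)) ↔
      ∃ u, q = (X ^ 2 - C ((2 * (αs 0).re : ℝ) : Quaternion ℝ) * X
            + C ((‖αs 0‖ ^ 2 : ℝ) : Quaternion ℝ)) ^ k *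
          (((List.range (n - k)).map fun i => X - C (αs i)).prod) * u := by
  set r := (αs 0).re
  set s := ‖αs 0‖
  intro q
  constructor
  · rintro ⟨⟨u, hu⟩, ⟨v, hv⟩⟩
    obtain ⟨t, ht⟩ := fwd k n αs βs q u v hk hnk hαV hβV hαchain hβchain hcop hu hv
    exact ⟨t, by rw [ht, mul_assoc]; rfl⟩
  · rintro ⟨u, hu⟩
    have hu' : q = XV r s ^ k * (Pc αs (n - k) * u) := by rw [hu, mul_assoc]; rfl
    constructor
    · obtain ⟨t, ht⟩ := rev αs k (n - k) (fun i hi => hαV i (by omega))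
      refine ⟨t * u, ?_⟩
      have hcomm : XV r s ^ k * Pc αs (n - k) = Pc αs (n - k) * XV r s ^ k :=
        ((XV_commute r s _).pow_left k).eq
      have hnn : n - k + k = n := by omega
      rw [hu', ← mul_assoc, hcomm, ht, hnn, mul_assoc]
      rfl
    · obtain ⟨t, ht⟩ := rev βs k 0 (fun i hi => hβV i (by omega))
      rw [Pc_zero, one_mul, zero_add] at ht
      exact ⟨t * (Pc αs (n - k) * u), by rw [hu', ht, mul_assoc]; rfl⟩
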